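/- Let G be a graph with a subtree model (T,S) and let C, C', C'' be three distinct maximal cliques of G. If the clique subtree S(C') intersects the connecting path p(S(C), S(C'')) in T, then C' is a separator of G, i.e., there exist vertices c ∈ C \ (C' ∪ C'') and c'' ∈ C'' \ (C ∪ C') such that every path in G from c to c'' contains a vertex of C'. -/

import Mathlib

open SimpleGraph

/-- A subtree model of `G` on a tree `T`: each vertex gets a nonempty connected
subtree, and subtrees of distinct vertices intersect iff the vertices are adjacent. -/
def IsSubtreeModel {V W : Type*} (G : SimpleGraph V) (T : SimpleGraph W) (S : V → Set W) : Prop :=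
  T.IsTree ∧ (∀ v : V, (T.induce (S v)).Connected) ∧
    ∀ u v : V, u ≠ v → ((S u ∩ S v).Nonempty ↔ G.Adj u v)

/-- A maximal clique of `G`. -/
def IsMaxClique {V : Type*} (G : SimpleGraph V) (C : Set V) : Prop :=
  G.IsClique C ∧ ∀ D : Set V, G.IsClique D → C ⊆ D → C = D

lemma walk_in_connected_set {W : Type*} (T : SimpleGraph W) (s : Set W)
    (hs : (T.induce s).Connected) {u v : W} (hu : u ∈ s) (hv : v ∈ s) :
    ∃ r : T.Walk u v, ∀ y ∈ r.support, y ∈ s := by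
  obtain ⟨p⟩ := hs ⟨u, hu⟩ ⟨v, hv⟩
  refine ⟨p.map (Embedding.induce s).toHom, ?_⟩
  intro y hy
  replace hy : y ∈ (p.map (Embedding.induce s).toHom).support := hy
  rw [Walk.support_map, List.mem_map] at hy
  obtain ⟨z, _, rfl⟩ := hy
  exact z.2

lemma tree_walk_mem {W : Type*} {T : SimpleGraph W} (htree : T.IsTree)
    {a b x : W} {q : T.Walk a b} (hq : q.IsPath) (hx : x ∈ q.support)
    (r : T.Walk a b) : x ∈ r.support := by
  classical
  obtain ⟨p, hp, hun⟩ := htree.existsUnique_path a b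
  have h1 : q = p := hun q hq
  have h2 : r.bypass = p := hun r.bypass r.bypass_isPath
  exact r.support_bypass_subset (by rw [h2, ← h1]; exact hx)

/-- If the clique subtree of a maximal clique `C'` meets the connecting path between the
clique subtrees of two other distinct maximal cliques `C` and `C''`, then `C'` separates
some `c ∈ C \\ (C' ∪ C'')` from some `c'' ∈ C'' \\ (C ∪ C')`. Here the connecting path is
a path `q` in `T` from a node `a` of `S(C)` to a node `b` of `S(C'')` meeting `S(C)` only in
`a` and `S(C'')` only in `b`. -/
theorem clique_subtree_on_connecting_path_separator {V W : Type*} [Fintype V] [Fintype W]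
    (G : SimpleGraph V) (T : SimpleGraph W) (S : V → Set W) (h : IsSubtreeModel G T S)
    (C C' C'' : Set V) (hC : IsMaxClique G C) (hC' : IsMaxClique G C')
    (hC'' : IsMaxClique G C'')
    (h1 : C ≠ C') (h2 : C' ≠ C'') (h3 : C ≠ C'')
    (a b : W) (q : T.Walk a b) (hq : q.IsPath)
    (ha : a ∈ ⋂ v ∈ C, S v) (hb : b ∈ ⋂ v ∈ C'', S v)
    (hmin : ∀ x ∈ q.support, (x ∈ ⋂ v ∈ C, S v → x = a) ∧ (x ∈ ⋂ v ∈ C'', S v → x = b))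
    (hint : ∃ x ∈ q.support, x ∈ ⋂ v ∈ C', S v) :
    ∃ c ∈ C \ (C' ∪ C''), ∃ c'' ∈ C'' \ (C ∪ C'),
      ∀ p : G.Walk c c'', ∃ w ∈ p.support, w ∈ C' := by
  obtain ⟨htree, hconn, hadj⟩ := h
  obtain ⟨x, hxq, hxC'⟩ := hint
  have hSa : ∀ v ∈ C, a ∈ S v := fun v hv => Set.mem_iInter₂.mp ha v hv
  have hSb : ∀ v ∈ C'', b ∈ S v := fun v hv => Set.mem_iInter₂.mp hb v hv
  have hSx : ∀ v ∈ C', x ∈ S v := fun v hv => Set.mem_iInter₂.mp hxC' v hv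
  -- sets with a common point are cliques
  have hclique : ∀ (y : W) (D : Set V), (∀ v ∈ D, y ∈ S v) → G.IsClique D := by
    intro y D hD u hu v hv hne
    exact (hadj u v hne).mp ⟨y, hD u hu, hD v hv⟩
  -- two distinct max cliques can't be contained in a common clique
  have hdistinct : ∀ (D₁ D₂ E : Set V), IsMaxClique G D₁ → IsMaxClique G D₂ →
      G.IsClique E → D₁ ⊆ E → D₂ ⊆ E → D₁ = D₂ := by
    intro D₁ D₂ E hD₁ hD₂ hE hs1 hs2
    rw [hD₁.2 E hE hs1, hD₂.2 E hE hs2]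
  -- vertex whose subtree contains x must be in C'
  have hxmem : ∀ w : V, x ∈ S w → w ∈ C' := by
    intro w hw
    by_contra hwC'
    have hclq : G.IsClique (insert w C') := by
      apply hclique x
      rintro v (rfl | hv)
      · exact hw
      · exact hSx v hv
    apply hwC'
    rw [hC'.2 _ hclq (Set.subset_insert w C')]
    exact Set.mem_insert w C'
  have hxa : x ≠ a := by
    rintro rfl
    apply h1
    apply hdistinct C C' (C ∪ C') hC hC' _ Set.subset_union_left Set.subset_union_right
    apply hclique x
    rintro v (hv | hv)
    · exact hSa v hv
    · exact hSx v hv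
  -- subtree containing both a and b contains x
  have hq_sub : ∀ v : V, a ∈ S v → b ∈ S v → x ∈ S v := by
    intro v hav hbv
    obtain ⟨r, hr⟩ := walk_in_connected_set T (S v) (hconn v) hav hbv
    exact hr x (tree_walk_mem htree hq hxq r)
  -- existence of c
  have hc : ∃ c ∈ C, c ∉ C' ∧ c ∉ C'' := by
    by_contra hcon
    push_neg at hcon
    apply h1
    apply hdistinct C C' (C ∪ C') hC hC' _ Set.subset_union_left Set.subset_union_right
    apply hclique x
    rintro v (hv | hv)
    · by_cases hvC' : v ∈ C'
      · exact hSx v hvC'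
      · exact hq_sub v (hSa v hv) (hSb v (hcon v hv hvC'))
    · exact hSx v hv
  have hc'' : ∃ c'' ∈ C'', c'' ∉ C ∧ c'' ∉ C' := by
    by_contra hcon
    push_neg at hcon
    apply h2
    apply (hdistinct C'' C' (C'' ∪ C') hC'' hC' _ Set.subset_union_left
      Set.subset_union_right).symm
    apply hclique x
    rintro v (hv | hv)
    · by_cases hvC' : v ∈ C'
      · exact hSx v hvC'
      · refine hq_sub v (hSa v ?_) (hSb v hv)
        by_contra hvC
        exact hvC' (hcon v hv hvC)
    · exact hSx v hv
  obtain ⟨c, hcC, hcC', hcC''⟩ := hc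
  obtain ⟨c'', hc''C'', hc''C, hc''C'⟩ := hc''
  -- reachability from a avoiding x
  have hAa : ∃ r : T.Walk a a, x ∉ r.support := by
    exact ⟨Walk.nil, by simp [hxa]⟩
  have hprop : ∀ w : V, x ∉ S w → ∀ y y', y ∈ S w → y' ∈ S w →
      (∃ r : T.Walk a y, x ∉ r.support) → ∃ r : T.Walk a y', x ∉ r.support := by
    intro w hxw y y' hy hy' ⟨r, hr⟩
    obtain ⟨r0, hr0⟩ := walk_in_connected_set T (S w) (hconn w) hy hy'
    refine ⟨r.append r0, ?_⟩
    rw [Walk.mem_support_append_iff]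
    rintro (hx | hx)
    · exact hr hx
    · exact hxw (hr0 x hx)
  have hnAb : ¬ ∃ r : T.Walk a b, x ∉ r.support := by
    rintro ⟨r, hr⟩
    exact hr (tree_walk_mem htree hq hxq r)
  have key : ∀ (u d : V) (p : G.Walk u d), d ∈ C'' → d ∉ C' →
      (∀ w ∈ p.support, w ∉ C') →
      (∃ y ∈ S u, ∃ r : T.Walk a y, x ∉ r.support) → False := by
    intro u d p
    induction p with
    | nil =>
      rintro hd hd' hsup ⟨y, hy, hAy⟩
      have hxd : x ∉ S _ := fun hx => hd' (hxmem _ hx)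
      exact hnAb (hprop _ hxd y b hy (hSb _ hd) hAy)
    | @cons u u' _ hadj' p' ih =>
      rintro hd hd' hsup ⟨y, hy, hAy⟩
      have huC' : u ∉ C' := hsup u (Walk.start_mem_support _)
      have hxu : x ∉ S u := fun hx => huC' (hxmem _ hx)
      obtain ⟨z, hz1, hz2⟩ := (hadj u u' hadj'.ne).mpr hadj'
      refine ih hd hd' (fun w hw => hsup w ?_) ⟨z, hz2, hprop u hxu y z hy hz1 hAy⟩
      rw [Walk.support_cons]
      exact List.mem_cons_of_mem _ hw
  refine ⟨c, ⟨hcC, by simp [hcC', hcC'']⟩, c'', ⟨hc''C'', by simp [hc''C, hc''C']⟩, ?_⟩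
  intro p
  by_contra hcon
  push_neg at hcon
  exact key c c'' p hc''C'' hc''C' hcon ⟨a, hSa c hcC, hAa⟩
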